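/- Fix d > 1 and 0 < λ < ∞, and let f_λ denote the unique fixed point of the truncated cavity operator T, extended to ℝ by 1 on (-∞,-λ] and 0 on (λ,∞). Then for all x ≥ 0, f_λ(x) · ln(1 / f_λ(x)) ≤ (1 + x^d / e) · exp(-x^d / e), where the left-hand side is interpreted as 0 when f_λ(x) ∈ {0, 1}. -/

import Mathlib

open MeasureTheory Set

/-- The truncated cavity operator `T`. -/
noncomputable def T (d lam : ℝ) (f : ℝ → ℝ) : ℝ → ℝ :=
  fun x => Real.exp (-(d * ∫ y in (-x)..lam, (x + y) ^ (d - 1) * f y))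

/-- `f` is the fixed point of the truncated cavity operator on `[-λ, λ]`
(non-increasing and `[0,1]`-valued there), extended to `ℝ` by `1` on `(-∞, -λ]`
and `0` on `(λ, ∞)`. -/
def ExtFixedPoint (d lam : ℝ) (f : ℝ → ℝ) : Prop :=
  AntitoneOn f (Icc (-lam) lam) ∧
  (∀ x ∈ Icc (-lam) lam, f x ∈ Icc (0 : ℝ) 1) ∧
  (∀ x ≤ -lam, f x = 1) ∧ (∀ x > lam, f x = 0) ∧
  (∀ x ∈ Icc (-lam) lam, T d lam f x = f x)

/-- for all `x ≥ 0`, `f_λ(x) ln(1/f_λ(x)) ≤ (1 + x^d/e) exp(-x^d / e)`.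
(In Lean, `Real.log (1/u) = 0` when `u = 0` or `u = 1`, matching the convention.) -/
theorem fixedPoint_entropy_bound_pos (d lam : ℝ) (hd : 1 < d) (hlam : 0 < lam)
    (flam : ℝ → ℝ) (hflam : ExtFixedPoint d lam flam) :
    ∀ x : ℝ, 0 ≤ x →
      flam x * Real.log (1 / flam x) ≤
        (1 + x ^ d / Real.exp 1) * Real.exp (-(x ^ d / Real.exp 1)) := by
  obtain ⟨hAnti, hIcc, hlow, hhigh, hfix⟩ := hflam
  have hd0 : (0:ℝ) < d := by linarith
  have hd1 : (0:ℝ) ≤ d - 1 := by linarith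
  -- global bounds on flam
  have hf01 : ∀ y, 0 ≤ flam y ∧ flam y ≤ 1 := by
    intro y
    rcases le_or_gt y (-lam) with h | h
    · rw [hlow y h]; norm_num
    rcases le_or_gt y lam with h2 | h2
    · exact ⟨(hIcc y ⟨h.le, h2⟩).1, (hIcc y ⟨h.le, h2⟩).2⟩
    · rw [hhigh y h2]; norm_num
  have hfnn : ∀ y, 0 ≤ flam y := fun y => (hf01 y).1
  have hfle1 : ∀ y, flam y ≤ 1 := fun y => (hf01 y).2
  -- global antitonicity
  have hAnti' : Antitone flam := by
    intro a b hab
    rcases le_or_gt b (-lam) with hb | hb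
    · rw [hlow a (hab.trans hb), hlow b hb]
    rcases lt_or_ge lam b with hb2 | hb2
    · rw [hhigh b hb2]; exact hfnn a
    rcases le_or_gt a (-lam) with ha | ha
    · rw [hlow a ha]; exact hfle1 b
    · exact hAnti ⟨ha.le, hab.trans hb2⟩ ⟨hb.le, hb2⟩ hab
  have hmeas : Measurable flam := hAnti'.measurable
  -- integrability of the kernel times flam
  have hInt : ∀ x a b : ℝ, 0 ≤ x + a → a ≤ b →
      IntervalIntegrable (fun y => (x + y) ^ (d - 1) * flam y) volume a b := by
    intro x a b hxa hab
    rw [intervalIntegrable_iff_integrableOn_Ioc_of_le hab]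
    apply MeasureTheory.Integrable.mono' (g := fun _ => (x + b) ^ (d - 1))
      (integrable_const _)
    · exact (((Real.continuous_rpow_const hd1).comp
        (continuous_const.add continuous_id)).measurable.mul hmeas).aestronglyMeasurable
    · filter_upwards [ae_restrict_mem measurableSet_Ioc] with y hy
      have h1 : 0 ≤ x + y := by linarith [hy.1]
      have h3 : 0 ≤ (x + y) ^ (d - 1) := Real.rpow_nonneg h1 _
      have h2 : (x + y) ^ (d - 1) ≤ (x + b) ^ (d - 1) :=
        Real.rpow_le_rpow h1 (by linarith [hy.2]) hd1
      rw [Real.norm_eq_abs, abs_mul, abs_of_nonneg h3, abs_of_nonneg (hfnn y)]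
      calc (x + y) ^ (d - 1) * flam y ≤ (x + y) ^ (d - 1) * 1 :=
            mul_le_mul_of_nonneg_left (hfle1 y) h3
        _ ≤ (x + b) ^ (d - 1) := by rw [mul_one]; exact h2
  -- fixed-point equation in explicit form
  have hfe : ∀ x ∈ Icc (-lam) lam,
      flam x = Real.exp (-(d * ∫ y in (-x)..lam, (x + y) ^ (d - 1) * flam y)) := by
    intro x hx
    simpa only [T] using (hfix x hx).symm
  set J : ℝ := d * ∫ y in (0:ℝ)..lam, y ^ (d - 1) * flam y with hJ
  set c : ℝ := flam 0 with hc
  have hJc : c = Real.exp (-J) := by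
    have h := hfe 0 ⟨by linarith, hlam.le⟩
    simpa only [neg_zero, zero_add] using h
  have hc_pos : 0 < c := hJc ▸ Real.exp_pos _
  -- lower bound for the negative-part integral
  have hA : ∀ x : ℝ, 0 ≤ x →
      c * x ^ d ≤ d * ∫ y in (-x)..(0:ℝ), (x + y) ^ (d - 1) * flam y := by
    intro x hx
    have hi1 : IntervalIntegrable (fun y => (x + y) ^ (d - 1) * flam y) volume (-x) 0 :=
      hInt x (-x) 0 (by linarith) (by linarith)
    have hcont : Continuous fun y : ℝ => (x + y) ^ (d - 1) * c :=
      ((Real.continuous_rpow_const hd1).comp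
        (continuous_const.add continuous_id)).mul continuous_const
    have hmono : (∫ y in (-x)..(0:ℝ), (x + y) ^ (d - 1) * c)
        ≤ ∫ y in (-x)..(0:ℝ), (x + y) ^ (d - 1) * flam y := by
      apply intervalIntegral.integral_mono_on (by linarith) (hcont.intervalIntegrable _ _) hi1
      intro y hy
      have h0 : 0 ≤ x + y := by linarith [hy.1]
      exact mul_le_mul_of_nonneg_left (hAnti' hy.2) (Real.rpow_nonneg h0 _)
    have hcomp : (∫ y in (-x)..(0:ℝ), (x + y) ^ (d - 1) * c) = x ^ d / d * c := by
      rw [intervalIntegral.integral_mul_const]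
      congr 1
      have h := intervalIntegral.integral_comp_add_left (a := -x) (b := (0:ℝ))
        (fun u : ℝ => u ^ (d - 1)) x
      rw [h]
      have e1 : x + -x = 0 := by ring
      have e2 : x + 0 = x := by ring
      rw [e1, e2, integral_rpow (Or.inl (by linarith))]
      have e3 : d - 1 + 1 = d := by ring
      rw [e3, Real.zero_rpow (ne_of_gt hd0)]
      ring
    calc c * x ^ d = d * (x ^ d / d * c) := by field_simp
      _ ≤ d * ∫ y in (-x)..(0:ℝ), (x + y) ^ (d - 1) * flam y := by
          apply mul_le_mul_of_nonneg_left _ hd0.le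
          rw [← hcomp]; exact hmono
  -- integrability of s ↦ s^(d-1) * flam s on [0, lam]
  have hi0 : IntervalIntegrable (fun s => s ^ (d - 1) * flam s) volume 0 lam := by
    simpa only [zero_add] using hInt 0 0 lam (by norm_num) hlam.le
  -- lower bound for I(y)
  have hIy : ∀ y : ℝ, 0 ≤ y → y ≤ lam →
      J + c * y ^ d ≤ d * ∫ s in (-y)..lam, (y + s) ^ (d - 1) * flam s := by
    intro y hy0 hyl
    have hi1 := hInt y (-y) 0 (by linarith) (by linarith)
    have hi2 := hInt y 0 lam (by linarith) hlam.le
    have hsplit := intervalIntegral.integral_add_adjacent_intervals hi1 hi2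
    have hmono2 : (∫ s in (0:ℝ)..lam, s ^ (d - 1) * flam s)
        ≤ ∫ s in (0:ℝ)..lam, (y + s) ^ (d - 1) * flam s := by
      apply intervalIntegral.integral_mono_on hlam.le hi0 hi2
      intro s hs
      exact mul_le_mul_of_nonneg_right
        (Real.rpow_le_rpow hs.1 (by linarith) hd1) (hfnn s)
    have hJle : J ≤ d * ∫ s in (0:ℝ)..lam, (y + s) ^ (d - 1) * flam s := by
      rw [hJ]; exact mul_le_mul_of_nonneg_left hmono2 hd0.le
    rw [← hsplit, mul_add]
    have hAy := hA y hy0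
    linarith
  -- pointwise upper bound on flam
  have hB : ∀ y : ℝ, 0 ≤ y → y ≤ lam →
      flam y ≤ Real.exp (-J) * Real.exp (-(c * y ^ d)) := by
    intro y hy0 hyl
    rw [hfe y ⟨by linarith, hyl⟩, ← Real.exp_add]
    apply Real.exp_le_exp.mpr
    have := hIy y hy0 hyl
    linarith
  -- FTC computation
  have hFTC : (∫ y in (0:ℝ)..lam, d * c * y ^ (d - 1) * Real.exp (-(c * y ^ d)))
      = 1 - Real.exp (-(c * lam ^ d)) := by
    have hderiv : ∀ y ∈ Set.uIcc (0:ℝ) lam,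
        HasDerivAt (fun t : ℝ => -Real.exp (-(c * t ^ d)))
          (d * c * y ^ (d - 1) * Real.exp (-(c * y ^ d))) y := by
      intro y _
      have h1 : HasDerivAt (fun t : ℝ => t ^ d) (d * y ^ (d - 1)) y :=
        Real.hasDerivAt_rpow_const (Or.inr hd.le)
      have h2 := (((h1.const_mul c).neg).exp).neg
      refine h2.congr_deriv ?_
      simp only [Pi.neg_apply]
      ring
    have hcont : Continuous fun y : ℝ => d * c * y ^ (d - 1) * Real.exp (-(c * y ^ d)) := by
      have hc1 : Continuous fun y : ℝ => y ^ (d - 1) := Real.continuous_rpow_const hd1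
      have hc2 : Continuous fun y : ℝ => y ^ d := Real.continuous_rpow_const hd0.le
      exact (continuous_const.mul hc1).mul (Real.continuous_exp.comp (continuous_const.mul hc2).neg)
    rw [intervalIntegral.integral_eq_sub_of_hasDerivAt hderiv (hcont.intervalIntegrable _ _)]
    rw [Real.zero_rpow (ne_of_gt hd0)]
    simp
    ring
  -- J ≤ 1 hence c ≥ 1/e
  have hJ1 : J ≤ 1 := by
    have hcontK : Continuous fun y : ℝ =>
        Real.exp (-J) * (y ^ (d - 1) * Real.exp (-(c * y ^ d))) := by
      have hc1 : Continuous fun y : ℝ => y ^ (d - 1) := Real.continuous_rpow_const hd1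
      have hc2 : Continuous fun y : ℝ => y ^ d := Real.continuous_rpow_const hd0.le
      exact continuous_const.mul (hc1.mul (Real.continuous_exp.comp (continuous_const.mul hc2).neg))
    have hmono : (∫ y in (0:ℝ)..lam, y ^ (d - 1) * flam y)
        ≤ ∫ y in (0:ℝ)..lam, Real.exp (-J) * (y ^ (d - 1) * Real.exp (-(c * y ^ d))) := by
      apply intervalIntegral.integral_mono_on hlam.le hi0 (hcontK.intervalIntegrable _ _)
      intro y hy
      have h0 : 0 ≤ y ^ (d - 1) := Real.rpow_nonneg hy.1 _
      calc y ^ (d - 1) * flam y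
          ≤ y ^ (d - 1) * (Real.exp (-J) * Real.exp (-(c * y ^ d))) :=
            mul_le_mul_of_nonneg_left (hB y hy.1 hy.2) h0
        _ = Real.exp (-J) * (y ^ (d - 1) * Real.exp (-(c * y ^ d))) := by ring
    rw [intervalIntegral.integral_const_mul] at hmono
    set K : ℝ := ∫ y in (0:ℝ)..lam, y ^ (d - 1) * Real.exp (-(c * y ^ d)) with hK
    have hKE : d * c * K = 1 - Real.exp (-(c * lam ^ d)) := by
      rw [← hFTC, hK, ← intervalIntegral.integral_const_mul]
      apply intervalIntegral.integral_congr
      intro y _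
      ring
    have h1 : d * c * K ≤ 1 := by
      rw [hKE]; have := Real.exp_pos (-(c * lam ^ d)); linarith
    have h2 : J ≤ d * (Real.exp (-J) * K) := by
      rw [hJ]; exact mul_le_mul_of_nonneg_left hmono hd0.le
    have h3 : d * (Real.exp (-J) * K) ≤ 1 := by
      rw [← hJc]
      calc d * (c * K) = d * c * K := by ring
        _ ≤ 1 := h1
    linarith
  have hc_ge : Real.exp (-1) ≤ c := by
    rw [hJc]; exact Real.exp_le_exp.mpr (by linarith)
  -- main statement
  intro x hx
  rcases lt_or_ge lam x with hxl | hxl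
  · rw [hhigh x hxl]
    simp only [zero_mul]
    have hxd : 0 ≤ x ^ d := Real.rpow_nonneg hx _
    have he := Real.exp_pos 1
    apply mul_nonneg
    · have : 0 ≤ x ^ d / Real.exp 1 := div_nonneg hxd he.le
      linarith
    · exact (Real.exp_pos _).le
  · -- x ∈ [0, lam]
    have hxIcc : x ∈ Icc (-lam) lam := ⟨by linarith, hxl⟩
    set Ix : ℝ := d * ∫ y in (-x)..lam, (x + y) ^ (d - 1) * flam y with hIxdef
    have hfx : flam x = Real.exp (-Ix) := hfe x hxIcc
    have hxd : 0 ≤ x ^ d := Real.rpow_nonneg hx _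
    set a : ℝ := x ^ d / Real.exp 1 with ha
    have ha0 : 0 ≤ a := div_nonneg hxd (Real.exp_pos 1).le
    -- Ix ≥ c * x^d ≥ a
    have hIxge : c * x ^ d ≤ Ix := by
      have hi1 := hInt x (-x) 0 (by linarith) (by linarith)
      have hi2 := hInt x 0 lam (by linarith) hlam.le
      have hsplit := intervalIntegral.integral_add_adjacent_intervals hi1 hi2
      have hQ : 0 ≤ ∫ y in (0:ℝ)..lam, (x + y) ^ (d - 1) * flam y := by
        apply intervalIntegral.integral_nonneg hlam.le
        intro y hy
        exact mul_nonneg (Real.rpow_nonneg (by linarith [hy.1]) _) (hfnn y)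
      have hAx := hA x hx
      rw [hIxdef, ← hsplit, mul_add]
      nlinarith
    have haIx : a ≤ Ix := by
      have h1 : Real.exp (-1) * x ^ d ≤ c * x ^ d :=
        mul_le_mul_of_nonneg_right hc_ge hxd
      have h2 : a = Real.exp (-1) * x ^ d := by
        rw [ha, Real.exp_neg]
        field_simp
      linarith
    -- conclude
    rw [hfx]
    have hlog : Real.log (1 / Real.exp (-Ix)) = Ix := by
      rw [one_div, ← Real.exp_neg, neg_neg, Real.log_exp]
    rw [hlog]
    -- exp(-Ix) * Ix ≤ (1+a) * exp(-a)
    set s : ℝ := Ix - a with hs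
    have hs0 : 0 ≤ s := by linarith
    have hsplit : Real.exp (-Ix) = Real.exp (-a) * Real.exp (-s) := by
      rw [← Real.exp_add]; congr 1; rw [hs]; ring
    have hexp1 : s + 1 ≤ Real.exp s := Real.add_one_le_exp s
    have hexp2 : Real.exp (-s) * Real.exp s = 1 := by
      rw [← Real.exp_add]; simp
    have hE2pos : 0 < Real.exp (-s) := Real.exp_pos _
    have hE1pos : 0 < Real.exp (-a) := Real.exp_pos _
    have key : Real.exp (-s) * (a + s) ≤ 1 + a := by
      have hE2le : Real.exp (-s) * (1 + s) ≤ 1 := by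
        calc Real.exp (-s) * (1 + s) ≤ Real.exp (-s) * Real.exp s :=
              mul_le_mul_of_nonneg_left (by linarith) hE2pos.le
          _ = 1 := hexp2
      have hE2le1 : Real.exp (-s) ≤ 1 := by nlinarith
      nlinarith
    have hIxas : Ix = a + s := by rw [hs]; ring
    calc Real.exp (-Ix) * Ix = Real.exp (-a) * (Real.exp (-s) * (a + s)) := by
          rw [hsplit, hIxas]; ring
      _ ≤ Real.exp (-a) * (1 + a) := mul_le_mul_of_nonneg_left key hE1pos.le
      _ = (1 + a) * Real.exp (-a) := by ring
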